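/- Let Q = G Gᵀ + μ I. For any p, r ∈ ℝ^M, set s = r + (1/μ) Q p. Then the unique global minimizer of the function f(x) = ½‖x − s‖₂² + (1/(2μ))‖Gᵀ x‖₂² on ℝ^M is x* = p + μ Q⁻¹ r; i.e., the augmented Lagrangian data update is a Newton-like step from p in the direction Q⁻¹ r. -/

import Mathlib

open Matrix

/-- Let `Q = G Gᵀ + μ I`. For any `p, r ∈ ℝ^M`, set `s = r + (1/μ) Q p`. Then the unique
global minimizer of `f(x) = ½‖x − s‖₂² + (1/(2μ))‖Gᵀ x‖₂²` on `ℝ^M` is `x* = p + μ Q⁻¹ r`;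
i.e., the augmented Lagrangian data update is a Newton-like step from `p` in the direction
`Q⁻¹ r`. -/
theorem stmt_13 (N M : ℕ) (_hN : 0 < N) (_hM : 0 < M)
    (G : Matrix (Fin M) (Fin N) ℝ) (μ : ℝ) (hμ : 0 < μ)
    (Q : Matrix (Fin M) (Fin M) ℝ)
    (hQ : Q = G * Gᵀ + μ • (1 : Matrix (Fin M) (Fin M) ℝ))
    (p r : Fin M → ℝ) (s : Fin M → ℝ) (hs : s = r + (1/μ) • Q.mulVec p)
    (f : (Fin M → ℝ) → ℝ)
    (hf : ∀ x, f x = (1/2) * ((x - s) ⬝ᵥ (x - s))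
        + (1/(2*μ)) * (Gᵀ.mulVec x ⬝ᵥ Gᵀ.mulVec x)) :
    (∀ x, f (p + μ • Q⁻¹.mulVec r) ≤ f x) ∧
    (∀ y, (∀ x, f y ≤ f x) → y = p + μ • Q⁻¹.mulVec r) := by
  have hμ' : μ ≠ 0 := ne_of_gt hμ
  -- Q is positive definite, hence invertible
  have hGGt : (G * Gᵀ).PosSemidef := by
    have := Matrix.posSemidef_self_mul_conjTranspose G
    simpa [Matrix.conjTranspose_eq_transpose_of_trivial] using this
  have hQpd : Q.PosDef := by
    rw [hQ, Matrix.smul_one_eq_diagonal]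
    exact Matrix.PosDef.posSemidef_add hGGt (Matrix.posDef_diagonal_iff.mpr fun _ => hμ)
  have hQinv : Q * Q⁻¹ = 1 := Matrix.mul_nonsing_inv Q (Matrix.isUnit_iff_isUnit_det Q |>.mp hQpd.isUnit)
  set x₀ : Fin M → ℝ := p + μ • Q⁻¹.mulVec r with hx₀
  -- key: Q x₀ = μ s
  have hkey : Q.mulVec x₀ = μ • s := by
    rw [hx₀, hs]
    rw [Matrix.mulVec_add, Matrix.mulVec_smul, Matrix.mulVec_mulVec, hQinv, Matrix.one_mulVec]
    rw [smul_add, smul_smul]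
    field_simp
    rw [one_smul]
    abel
  -- (G Gᵀ) x₀ = μ s - μ x₀
  have hG : (G * Gᵀ).mulVec x₀ = μ • s - μ • x₀ := by
    have : Q.mulVec x₀ = (G * Gᵀ).mulVec x₀ + μ • x₀ := by
      rw [hQ, Matrix.add_mulVec, Matrix.smul_mulVec, Matrix.one_mulVec]
    rw [hkey] at this
    rw [eq_sub_iff_add_eq, ← this]
  -- decomposition of f
  have hdec : ∀ x, f x = f x₀ + (1/2) * ((x - x₀) ⬝ᵥ (x - x₀))
      + (1/(2*μ)) * (Gᵀ.mulVec (x - x₀) ⬝ᵥ Gᵀ.mulVec (x - x₀)) := by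
    intro x
    have hcross : (Gᵀ.mulVec (x - x₀)) ⬝ᵥ (Gᵀ.mulVec x₀)
        = (x - x₀) ⬝ᵥ (μ • s - μ • x₀) := by
      rw [← hG, ← Matrix.mulVec_mulVec, Matrix.dotProduct_mulVec (x - x₀) G,
        ← Matrix.mulVec_transpose]
    rw [hf x, hf x₀]
    have hGsub : Gᵀ.mulVec (x - x₀) = Gᵀ.mulVec x - Gᵀ.mulVec x₀ := Matrix.mulVec_sub _ _ _
    have e1 : (x - s) = (x - x₀) + (x₀ - s) := by abel
    have e2 : Gᵀ.mulVec x = Gᵀ.mulVec (x - x₀) + Gᵀ.mulVec x₀ := by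
      rw [hGsub]; abel
    rw [e1, e2]
    simp only [dotProduct_add, add_dotProduct, dotProduct_sub,
      sub_dotProduct, dotProduct_smul, smul_dotProduct] at hcross ⊢
    have hsymm2 : (Gᵀ.mulVec x₀) ⬝ᵥ (Gᵀ.mulVec (x - x₀))
        = (Gᵀ.mulVec (x - x₀)) ⬝ᵥ (Gᵀ.mulVec x₀) := dotProduct_comm _ _
    rw [hsymm2, hcross, dotProduct_comm x₀ x, dotProduct_comm s x,
      dotProduct_comm s x₀]
    simp only [smul_eq_mul]
    field_simp
    ring
  have hnn : ∀ (K : ℕ) (v : Fin K → ℝ), 0 ≤ v ⬝ᵥ v := fun K v =>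
    Finset.sum_nonneg fun i _ => mul_self_nonneg (v i)
  have hge : ∀ x, f x₀ ≤ f x := by
    intro x
    rw [hdec x]
    have h1 := hnn M (x - x₀)
    have h2 := hnn N (Gᵀ.mulVec (x - x₀))
    have hp : (0:ℝ) < 1/(2*μ) := by positivity
    nlinarith [mul_nonneg hp.le h2]
  refine ⟨hge, ?_⟩
  intro y hy
  have h1 := hy x₀
  rw [hdec y] at h1
  have h2 := hnn M (y - x₀)
  have h3 := hnn N (Gᵀ.mulVec (y - x₀))
  have hp : (0:ℝ) < 1/(2*μ) := by positivity
  have h4 : (y - x₀) ⬝ᵥ (y - x₀) = 0 := by nlinarith [mul_nonneg hp.le h3]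
  have h5 : y - x₀ = 0 := dotProduct_self_eq_zero.mp h4
  have := sub_eq_zero.mp h5
  exact this
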